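/- arXiv:1505.07993 — 6 statements merged into one kernel-verified Lean document; each statement's English description precedes it below -/
import Mathlib

section
/- Let ψ̂ : ℝ → ℝ be differentiable, let μ̂ : ℝ → ℝ, and let ĥ : ℝ × ℝ³ → ℝ³. Suppose the dissipation inequality (ψ̂'(u) − μ̂(u))·v + ĥ(u,g)·g ≤ 0 holds for all u, v ∈ ℝ and all g ∈ ℝ³. Then μ̂(u) = ψ̂'(u) for every u ∈ ℝ, and the residual inequality ĥ(u,g)·g ≤ 0 holds for all u ∈ ℝ and g ∈ ℝ³. -/
open Matrix

/-- Consistency with the dissipation inequality forces the chemical potential to be the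
derivative of the free energy, and yields the residual inequality for the flux. -/
theorem dissipation_forces_state_equation_and_residual
    (ψ : ℝ → ℝ) (hψ : Differentiable ℝ ψ)
    (μ : ℝ → ℝ) (h : ℝ × (Fin 3 → ℝ) → Fin 3 → ℝ)
    (hdiss : ∀ (u v : ℝ) (g : Fin 3 → ℝ),
      (deriv ψ u - μ u) * v + h (u, g) ⬝ᵥ g ≤ 0) :
    (∀ u : ℝ, μ u = deriv ψ u) ∧
    (∀ (u : ℝ) (g : Fin 3 → ℝ), h (u, g) ⬝ᵥ g ≤ 0) := by
  constructor
  · intro u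
    have h1 := hdiss u 1 0
    have h2 := hdiss u (-1) 0
    simp [dotProduct] at h1 h2
    linarith
  · intro u g
    have := hdiss u 0 g
    simpa using this
end

section
/- Let ĥ : ℝ × ℝ³ → ℝ³ be such that for each u ∈ ℝ the map g ↦ ĥ(u,g) is continuous, and suppose that ĥ(u,g)·g ≤ 0 for all u ∈ ℝ and g ∈ ℝ³. Then ĥ(u,0) = 0 for every u ∈ ℝ. (In words: if the gradient of chemical potential is null, then the flux of diffusant is null as well.) -/
open Matrix

/-- If the residual dissipation inequality holds and the flux mapping is continuous in the
chemical-potential gradient, then a null gradient implies a null flux. -/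
theorem flux_vanishes_at_zero_gradient
    (h : ℝ × (Fin 3 → ℝ) → Fin 3 → ℝ)
    (hcont : ∀ u : ℝ, Continuous fun g : Fin 3 → ℝ => h (u, g))
    (hdiss : ∀ (u : ℝ) (g : Fin 3 → ℝ), h (u, g) ⬝ᵥ g ≤ 0) :
    ∀ u : ℝ, h (u, 0) = 0 := by
  intro u
  set v := h (u, 0) with hv
  have key : v ⬝ᵥ v ≤ 0 := by
    have hf : Continuous fun t : ℝ => h (u, t • v) ⬝ᵥ v := by
      simp only [dotProduct]
      apply continuous_finset_sum
      intro i _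
      exact (((continuous_apply i).comp
        ((hcont u).comp (continuous_id.smul continuous_const))).mul continuous_const)
    have htend : Filter.Tendsto (fun t : ℝ => h (u, t • v) ⬝ᵥ v)
        (nhdsWithin 0 (Set.Ioi 0)) (nhds (v ⬝ᵥ v)) := by
      have := hf.tendsto 0
      simpa [hv] using this.mono_left nhdsWithin_le_nhds
    refine le_of_tendsto htend ?_
    filter_upwards [self_mem_nhdsWithin] with t ht
    have ht' : (0:ℝ) < t := ht
    have := hdiss u (t • v)
    have h2 : t * (h (u, t • v) ⬝ᵥ v) ≤ 0 := by
      simpa [dotProduct_smul, smul_eq_mul] using this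
    nlinarith
  have := dotProduct_self_eq_zero.mp (le_antisymm key (Finset.sum_nonneg fun i _ => mul_self_nonneg (v i)))
  simpa [hv] using this
end

section
/- Let ĥ : ℝ × ℝ³ → ℝ³ be such that for each u ∈ ℝ the map g ↦ ĥ(u,g) is continuously differentiable, ĥ(u,0) = 0 for all u, and ĥ(u,g)·g ≤ 0 for all u ∈ ℝ, g ∈ ℝ³. Then there exists a tensorial-mobility mapping M̂ : ℝ × ℝ³ → (3×3 real matrices), continuous in its second argument for each fixed u, such that ĥ(u,g) = −M̂(u,g) g for all u, g, and moreover (M̂(u,g) g)·g ≥ 0 for all u ∈ ℝ and g ∈ ℝ³. -/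
open Matrix

/-- Representation of the flux through a tensorial-mobility mapping:
`h(u,g) = -M(u,g) g` with `(M(u,g) g) ⬝ g ≥ 0`. -/
theorem flux_representation_tensorial_mobility
    (h : ℝ × (Fin 3 → ℝ) → Fin 3 → ℝ)
    (hsmooth : ∀ u : ℝ, ContDiff ℝ 1 fun g : Fin 3 → ℝ => h (u, g))
    (hzero : ∀ u : ℝ, h (u, 0) = 0)
    (hdiss : ∀ (u : ℝ) (g : Fin 3 → ℝ), h (u, g) ⬝ᵥ g ≤ 0) :
    ∃ M : ℝ × (Fin 3 → ℝ) → Matrix (Fin 3) (Fin 3) ℝ,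
      (∀ u : ℝ, Continuous fun g : Fin 3 → ℝ => M (u, g)) ∧
      (∀ (u : ℝ) (g : Fin 3 → ℝ), h (u, g) = -(M (u, g) *ᵥ g)) ∧
      (∀ (u : ℝ) (g : Fin 3 → ℝ), 0 ≤ (M (u, g) *ᵥ g) ⬝ᵥ g) := by
  classical
  set D : ℝ → (Fin 3 → ℝ) → ((Fin 3 → ℝ) →L[ℝ] (Fin 3 → ℝ)) :=
    fun u g => fderiv ℝ (fun g : Fin 3 → ℝ => h (u, g)) g with hD
  have hDcont : ∀ u, Continuous (D u) := fun u =>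
    (hsmooth u).continuous_fderiv one_ne_zero
  set M : ℝ × (Fin 3 → ℝ) → Matrix (Fin 3) (Fin 3) ℝ :=
    fun p => Matrix.of fun i j =>
      -∫ t in (0:ℝ)..1, (D p.1 (t • p.2)) (Pi.single j 1) i with hM
  have hrep : ∀ (u : ℝ) (g : Fin 3 → ℝ), h (u, g) = -(M (u, g) *ᵥ g) := by
    intro u g
    have hderiv : ∀ t ∈ Set.uIcc (0:ℝ) 1,
        HasDerivAt (fun t : ℝ => h (u, t • g)) ((D u (t • g)) g) t := by
      intro t _
      have h1 : HasFDerivAt (fun g' : Fin 3 → ℝ => h (u, g')) (D u (t • g)) (t • g) :=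
        ((hsmooth u).differentiable one_ne_zero (t • g)).hasFDerivAt
      have h2 : HasDerivAt (fun t : ℝ => t • g) g t := by
        simpa using (hasDerivAt_id t).smul_const g
      exact h1.comp_hasDerivAt t h2
    have hint : ∀ v : Fin 3 → ℝ,
        IntervalIntegrable (fun t : ℝ => (D u (t • g)) v) MeasureTheory.volume 0 1 := by
      intro v
      apply Continuous.intervalIntegrable
      exact (ContinuousLinearMap.apply ℝ (Fin 3 → ℝ) v).continuous.comp
        ((hDcont u).comp (continuous_id.smul continuous_const))
    have hftc : ∫ t in (0:ℝ)..1, (D u (t • g)) g = h (u, g) := by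
      have := intervalIntegral.integral_eq_sub_of_hasDerivAt hderiv (hint g)
      simpa [hzero u] using this
    funext i
    have hgsum : g = ∑ j : Fin 3, g j • (Pi.single j (1:ℝ) : Fin 3 → ℝ) := by
      funext k
      simp [Pi.single_apply, Finset.sum_apply]
    have hsum : ∀ t : ℝ,
        (D u (t • g)) g = ∑ j : Fin 3, g j • (D u (t • g)) (Pi.single j 1) := by
      intro t
      have h0 := congrArg (D u (t • g)) hgsum
      rw [h0, map_sum]
      exact Finset.sum_congr rfl fun j _ => (D u (t • g)).map_smul _ _
    have hsplit : (∫ t in (0:ℝ)..1, (D u (t • g)) g) =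
        ∑ j : Fin 3, g j • ∫ t in (0:ℝ)..1, (D u (t • g)) (Pi.single j 1) := by
      simp_rw [hsum]
      rw [intervalIntegral.integral_finset_sum]
      · exact Finset.sum_congr rfl fun j _ => intervalIntegral.integral_smul (g j) _
      · intro j _
        exact (hint (Pi.single j 1)).smul (g j)
    have hival : ∀ j : Fin 3, (∫ t in (0:ℝ)..1, (D u (t • g)) (Pi.single j 1)) i =
        ∫ t in (0:ℝ)..1, (D u (t • g)) (Pi.single j 1) i :=
      fun j => ((ContinuousLinearMap.proj i : (Fin 3 → ℝ) →L[ℝ] ℝ).intervalIntegral_comp_comm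
        (hint (Pi.single j 1))).symm
    have hcomp : h (u, g) i =
        ∑ j : Fin 3, g j * ∫ t in (0:ℝ)..1, (D u (t • g)) (Pi.single j 1) i := by
      rw [← hftc, hsplit]
      simp [Finset.sum_apply, hival]
    simp only [hM, Pi.neg_apply, Matrix.mulVec, dotProduct, Matrix.of_apply]
    rw [hcomp]
    simp only [neg_mul, Finset.sum_neg_distrib, neg_neg]
    exact Finset.sum_congr rfl fun j _ => mul_comm _ _
  refine ⟨M, ?_, hrep, ?_⟩
  · intro u
    apply continuous_pi; intro i; apply continuous_pi; intro j
    apply Continuous.neg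
    apply intervalIntegral.continuous_parametric_intervalIntegral_of_continuous'
    have hc : Continuous fun p : (Fin 3 → ℝ) × ℝ => D u (p.2 • p.1) :=
      (hDcont u).comp (continuous_snd.smul continuous_fst)
    exact (continuous_apply i).comp
      ((ContinuousLinearMap.apply ℝ (Fin 3 → ℝ) (Pi.single j 1)).continuous.comp hc)
  · intro u g
    have := hdiss u g
    rw [hrep u g, neg_dotProduct] at this
    linarith
end

section
/- Let ψ̃ : ℝ × ℝ → ℝ be differentiable, let μ̃ : ℝ × ℝ → ℝ, and let h̃ : ℝ × ℝ × ℝ³ → ℝ³. Suppose the dissipation inequality (∂₁ψ̃(u,v) − μ̃(u,v))·v + h̃(u,v,g)·g + ∂₂ψ̃(u,v)·w ≤ 0 holds for all u, v, w ∈ ℝ and all g ∈ ℝ³. Then ∂₂ψ̃(u,v) = 0 for all u, v ∈ ℝ; consequently there exists a function ψ̂ : ℝ → ℝ such that ψ̃(u,v) = ψ̂(u) for all u, v ∈ ℝ (the free energy cannot depend on the rate). -/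
open Matrix

/-- The dissipation inequality, required to hold for arbitrary continuations of a process,
forces the free energy to be independent of the concentration rate. -/
theorem free_energy_rate_independent
    (ψ : ℝ × ℝ → ℝ) (hψ : Differentiable ℝ ψ)
    (μ : ℝ × ℝ → ℝ) (h : ℝ × ℝ × (Fin 3 → ℝ) → Fin 3 → ℝ)
    (hdiss : ∀ (u v w : ℝ) (g : Fin 3 → ℝ),
      (deriv (fun s => ψ (s, v)) u - μ (u, v)) * v + h (u, v, g) ⬝ᵥ g
        + deriv (fun s => ψ (u, s)) v * w ≤ 0) :
    (∀ u v : ℝ, deriv (fun s => ψ (u, s)) v = 0) ∧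
    ∃ ψ0 : ℝ → ℝ, ∀ u v : ℝ, ψ (u, v) = ψ0 u := by
  have key : ∀ u v : ℝ, deriv (fun s => ψ (u, s)) v = 0 := by
    intro u v
    set B := deriv (fun s => ψ (u, s)) v with hB
    by_contra hBne
    set C := (deriv (fun s => ψ (s, v)) u - μ (u, v)) * v with hC
    have h1 := hdiss u v ((1 - C) / B) 0
    simp [dotProduct, ← hC, ← hB] at h1
    rw [mul_div_cancel₀ _ hBne] at h1
    linarith
  refine ⟨key, ⟨fun u => ψ (u, 0), fun u v => ?_⟩⟩
  have hd : Differentiable ℝ (fun s : ℝ => ψ (u, s)) :=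
    hψ.comp ((differentiable_const u).prodMk differentiable_id)
  have := is_const_of_deriv_eq_zero hd (fun s => key u s) v 0
  exact this
end

section
/- Let ψ̂ : ℝ → ℝ be differentiable and let μ̃ : ℝ × ℝ → ℝ be such that for each u ∈ ℝ the map v ↦ μ̃(u,v) is continuous. Suppose that (ψ̂'(u) − μ̃(u,v))·v ≤ 0 for all u, v ∈ ℝ. Then μ̃(u,0) = ψ̂'(u) for every u ∈ ℝ. -/
/-- The rate-dependent chemical potential reduces to the derivative of the coarse-grain
free energy at zero rate. -/
theorem chemical_potential_at_zero_rate
    (ψ : ℝ → ℝ) (hψ : Differentiable ℝ ψ)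
    (μ : ℝ × ℝ → ℝ) (hcont : ∀ u : ℝ, Continuous fun v : ℝ => μ (u, v))
    (hdiss : ∀ u v : ℝ, (deriv ψ u - μ (u, v)) * v ≤ 0) :
    ∀ u : ℝ, μ (u, 0) = deriv ψ u := by
  intro u
  set g : ℝ → ℝ := fun v => deriv ψ u - μ (u, v) with hg
  have hgc : Continuous g := continuous_const.sub (hcont u)
  have h1 : g 0 ≤ 0 := by
    have htend : Filter.Tendsto g (nhdsWithin 0 (Set.Ioi 0)) (nhds (g 0)) :=
      (hgc.tendsto 0).mono_left nhdsWithin_le_nhds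
    refine le_of_tendsto htend ?_
    filter_upwards [self_mem_nhdsWithin] with v hv
    have h := hdiss u v
    have hv' : 0 < v := hv
    show deriv ψ u - μ (u, v) ≤ 0
    nlinarith
  have h2 : 0 ≤ g 0 := by
    have htend : Filter.Tendsto g (nhdsWithin 0 (Set.Iio 0)) (nhds (g 0)) :=
      (hgc.tendsto 0).mono_left nhdsWithin_le_nhds
    refine ge_of_tendsto htend ?_
    filter_upwards [self_mem_nhdsWithin] with v hv
    have h := hdiss u v
    have hv' : v < 0 := hv
    show 0 ≤ deriv ψ u - μ (u, v)
    nlinarith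
  have : g 0 = 0 := le_antisymm h1 h2
  simp only [hg] at this
  linarith
end

section
/- Let K > 0 and A > γ > 0. Let P : ℝ → ℝ be the projection onto the closed interval [−(A−γ), A−γ], i.e. P(x) = max(−(A−γ), min(A−γ, x)). Define v : [0,∞) → ℝ by v(s) = 0 for s ∈ [0, γ/(4A)] and v(s) = (1/K) · P( A z( s − γ/(4A) ) ) for s ≥ γ/(4A). Then v is locally Lipschitz, v(0) = 0, and v solves the rate-independent system driven by the zigzag datum: for almost every s ≥ 0, if v'(s) ≠ 0 then A z(s) = K v(s) + γ·(v'(s)/|v'(s)|), and if v'(s) = 0 then A z(s) − K v(s) ∈ [−γ, γ]. -/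
open MeasureTheory

/-- The 1-periodic zigzag function, equal on `[0,1)` to `4s` on `[0,1/4)`,
`2 - 4s` on `[1/4,3/4)` and `-4 + 4s` on `[3/4,1)`. -/
noncomputable def zigzag (s : ℝ) : ℝ :=
  if Int.fract s < 1 / 4 then 4 * Int.fract s
  else if Int.fract s < 3 / 4 then 2 - 4 * Int.fract s
  else -4 + 4 * Int.fract s

lemma infDist_intRange (x : ℝ) :
    Metric.infDist x (Set.range ((↑) : ℤ → ℝ)) = min (Int.fract x) (1 - Int.fract x) := by
  have hf0 := Int.fract_nonneg x
  have hf1 := Int.fract_lt_one x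
  have hfr : Int.fract x = x - ⌊x⌋ := rfl
  have hne : (Set.range ((↑) : ℤ → ℝ)).Nonempty := Set.range_nonempty _
  apply le_antisymm
  · refine le_min ?_ ?_
    · have := Metric.infDist_le_dist_of_mem (x := x) (s := Set.range ((↑) : ℤ → ℝ)) ⟨⌊x⌋, rfl⟩
      rwa [Real.dist_eq, ← hfr, abs_of_nonneg hf0] at this
    · have hmem : ((⌊x⌋ : ℝ) + 1) ∈ Set.range ((↑) : ℤ → ℝ) := ⟨⌊x⌋ + 1, by push_cast; ring⟩
      have := Metric.infDist_le_dist_of_mem (x := x) hmem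
      rw [Real.dist_eq] at this
      have habs : |x - ((⌊x⌋ : ℝ) + 1)| = 1 - Int.fract x := by
        rw [abs_of_nonpos (by rw [hfr] at hf1; linarith)]; rw [hfr]; ring
      linarith
  · by_contra hcon
    push_neg at hcon
    obtain ⟨y, ⟨n, rfl⟩, hd⟩ := (Metric.infDist_lt_iff hne).1 hcon
    rw [Real.dist_eq] at hd
    have hm1 : min (Int.fract x) (1 - Int.fract x) ≤ Int.fract x := min_le_left _ _
    have hm2 : min (Int.fract x) (1 - Int.fract x) ≤ 1 - Int.fract x := min_le_right _ _
    rcases le_or_gt n ⌊x⌋ with hn | hn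
    · have hn' : (n : ℝ) ≤ (⌊x⌋ : ℝ) := by exact_mod_cast hn
      have : Int.fract x ≤ x - n := by rw [hfr]; linarith
      have : Int.fract x ≤ |x - n| := this.trans (le_abs_self _)
      linarith
    · have hn' : (⌊x⌋ : ℝ) + 1 ≤ (n : ℝ) := by exact_mod_cast hn
      have : 1 - Int.fract x ≤ (n : ℝ) - x := by rw [hfr]; linarith
      have : 1 - Int.fract x ≤ |x - n| := this.trans ((abs_sub_comm x n) ▸ le_abs_self _)
      linarith

lemma zigzag_eq_infDist (t : ℝ) :
    zigzag t = 1 - 4 * Metric.infDist (t - 1/4) (Set.range ((↑) : ℤ → ℝ)) := by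
  rw [infDist_intRange]
  have hf0 := Int.fract_nonneg t
  have hf1 := Int.fract_lt_one t
  have hsplit : Int.fract (t - 1/4) = Int.fract (Int.fract t - 1/4) := by
    rw [show t - 1/4 = (⌊t⌋ : ℝ) + (Int.fract t - 1/4) by
      have := Int.floor_add_fract t; linarith, Int.fract_intCast_add]
  unfold zigzag
  split_ifs with h1 h2
  · have hfq : Int.fract (t - 1/4) = Int.fract t + 3/4 := by
      rw [hsplit, show Int.fract t - 1/4 = (Int.fract t + 3/4) + ((-1 : ℤ) : ℝ) by
        push_cast; ring, Int.fract_add_intCast, Int.fract_eq_self.2 ⟨by linarith, by linarith⟩]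
    rw [hfq, min_eq_right (by linarith)]; ring
  · have hfq : Int.fract (t - 1/4) = Int.fract t - 1/4 := by
      rw [hsplit, Int.fract_eq_self.2 ⟨by linarith, by linarith⟩]
    rw [hfq, min_eq_left (by linarith)]; ring
  · have hfq : Int.fract (t - 1/4) = Int.fract t - 1/4 := by
      rw [hsplit, Int.fract_eq_self.2 ⟨by linarith, by linarith⟩]
    rw [hfq, min_eq_right (by linarith)]; ring

lemma zigzag_continuous : Continuous zigzag := by
  have : Continuous fun t : ℝ => 1 - 4 * Metric.infDist (t - 1/4) (Set.range ((↑) : ℤ → ℝ)) := by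
    exact continuous_const.sub (continuous_const.mul
      ((Metric.continuous_infDist_pt _).comp (continuous_id.sub continuous_const)))
  convert this using 1
  funext t; exact zigzag_eq_infDist t

lemma zigzag_lip (a b : ℝ) : |zigzag a - zigzag b| ≤ 4 * |a - b| := by
  have key : ∀ x y : ℝ, |Metric.infDist x (Set.range ((↑) : ℤ → ℝ))
      - Metric.infDist y (Set.range ((↑) : ℤ → ℝ))| ≤ |x - y| := by
    intro x y
    have h1 := Metric.infDist_le_infDist_add_dist (x := x) (y := y)
      (s := Set.range ((↑) : ℤ → ℝ))
    have h2 := Metric.infDist_le_infDist_add_dist (x := y) (y := x)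
      (s := Set.range ((↑) : ℤ → ℝ))
    rw [Real.dist_eq] at h1 h2
    have hc1 : |y - x| = |x - y| := abs_sub_comm y x
    rw [abs_sub_le_iff]
    exact ⟨by linarith, by linarith⟩
  rw [zigzag_eq_infDist a, zigzag_eq_infDist b]
  have h := key (a - 1/4) (b - 1/4)
  rw [show a - 1/4 - (b - 1/4) = a - b by ring] at h
  set p := Metric.infDist (a - 1/4) (Set.range ((↑) : ℤ → ℝ))
  set q := Metric.infDist (b - 1/4) (Set.range ((↑) : ℤ → ℝ))
  rw [show 1 - 4*p - (1 - 4*q) = -(4*(p - q)) by ring, abs_neg, abs_mul,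
    abs_of_nonneg (by norm_num : (0:ℝ) ≤ 4)]
  linarith [abs_nonneg (p - q)]

lemma zigzag_abs_le (t : ℝ) : |zigzag t| ≤ 1 := by
  have hf0 := Int.fract_nonneg t
  have hf1 := Int.fract_lt_one t
  unfold zigzag
  split_ifs with h1 h2 <;> rw [abs_le] <;> constructor <;> linarith

lemma zig_inc (n : ℤ) (u : ℝ) (h1 : -(1/4) < u - n) (h2 : u - n < 1/4) :
    zigzag u = 4 * (u - n) := by
  have hfr : Int.fract u = Int.fract (u - n) := (Int.fract_sub_intCast u n).symm
  rcases le_or_gt 0 (u - n) with hr | hr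
  · have hf : Int.fract u = u - n := by rw [hfr, Int.fract_eq_self.2 ⟨hr, by linarith⟩]
    unfold zigzag
    rw [hf, if_pos (by linarith)]
  · have hf : Int.fract u = u - n + 1 := by
      rw [hfr, ← Int.fract_add_one (u - n), Int.fract_eq_self.2 ⟨by linarith, by linarith⟩]
    unfold zigzag
    rw [hf, if_neg (by linarith), if_neg (by linarith)]
    ring

lemma zig_dec (n : ℤ) (u : ℝ) (h1 : 1/4 < u - n) (h2 : u - n < 3/4) :
    zigzag u = 2 - 4 * (u - n) := by
  have hf : Int.fract u = u - n := by
    rw [← Int.fract_sub_intCast u n, Int.fract_eq_self.2 ⟨by linarith, by linarith⟩]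
  unfold zigzag
  rw [hf, if_neg (by linarith), if_pos (by linarith)]

lemma clamp_lip (c x y : ℝ) :
    |max (-c) (min c x) - max (-c) (min c y)| ≤ |x - y| := by
  have h1 := abs_max_sub_max_le_max (-c) (min c x) (-c) (min c y)
  have h2 := abs_min_sub_min_le_max c x c y
  simp only [sub_self, abs_zero] at h1 h2
  have h3 : max (0:ℝ) |min c x - min c y| = |min c x - min c y| :=
    max_eq_right (abs_nonneg _)
  have h4 : max (0:ℝ) |x - y| = |x - y| := max_eq_right (abs_nonneg _)
  rw [h3] at h1; rw [h4] at h2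
  exact h1.trans h2

lemma deriv_affine_local (v : ℝ → ℝ) (s a b m q : ℝ) (h : s ∈ Set.Ioo a b)
    (hval : ∀ u ∈ Set.Ioo a b, v u = m * u + q) : deriv v s = m := by
  have hev : v =ᶠ[nhds s] fun u => m * u + q :=
    Filter.eventuallyEq_of_mem (Ioo_mem_nhds h.1 h.2) hval
  rw [hev.deriv_eq]
  have hd : HasDerivAt (fun u : ℝ => m * u + q) m s := by
    simpa using ((hasDerivAt_id s).const_mul m).add_const q
  exact hd.deriv

section Aux

variable {K γ A δ : ℝ}

/-- unsaturated increasing branch -/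
lemma aux_inc (hK : 0 < K) (hγ : 0 < γ) (hA : γ < A)
    (hδpos : 0 < δ) (hAδ : 4 * A * δ = γ)
    (v : ℝ → ℝ)
    (hv1 : ∀ u : ℝ, δ ≤ u → v u = (1/K) * max (-(A-γ)) (min (A-γ) (A * zigzag (u - δ))))
    (s : ℝ) (n : ℤ) (hs : δ < s)
    (h1 : -(1/4 - δ) < s - δ - n) (h2 : s - δ - n < 1/4 - δ) :
    (deriv v s ≠ 0 → A * zigzag s = K * v s + γ * (deriv v s / |deriv v s|)) ∧
    (deriv v s = 0 → A * zigzag s - K * v s ∈ Set.Icc (-γ) γ) := by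
  have hA0 : 0 < A := hγ.trans hA
  have hδ4 : δ < 1/4 := by nlinarith
  have hsab : s ∈ Set.Ioo (max δ ((n : ℝ) + 2*δ - 1/4)) ((n : ℝ) + 1/4) :=
    ⟨max_lt hs (by linarith), by linarith⟩
  set a := max δ ((n : ℝ) + 2*δ - 1/4) with ha
  set b := (n : ℝ) + 1/4 with hb
  have hval : ∀ u ∈ Set.Ioo a b, v u = ((4*A)/K) * u + (-((4*A)/K) * (δ + n)) := by
    intro u hu
    have hu1 : δ < u := (le_max_left _ _).trans_lt hu.1
    have hu2 : (n : ℝ) + 2*δ - 1/4 < u := (le_max_right _ _).trans_lt hu.1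
    have hu3 : u < (n : ℝ) + 1/4 := hu.2
    have hz : zigzag (u - δ) = 4 * ((u - δ) - n) :=
      zig_inc n (u - δ) (by linarith) (by linarith)
    have hb1 : A * (4 * ((u - δ) - n)) ≤ A - γ := by nlinarith
    have hb2 : -(A - γ) ≤ A * (4 * ((u - δ) - n)) := by nlinarith
    rw [hv1 u hu1.le, hz, min_eq_right hb1, max_eq_right hb2]
    field_simp; ring
  have hder : deriv v s = (4*A)/K := deriv_affine_local v s a b _ _ hsab hval
  have hvs := hval s hsab
  have hKv : K * v s = 4*A*(s - δ - n) := by rw [hvs]; field_simp; ring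
  have hzs : zigzag s = 4 * (s - n) := zig_inc n s (by linarith) (by linarith)
  have hpos : (0:ℝ) < 4*A/K := by positivity
  constructor
  · intro _
    rw [hder, abs_of_pos hpos, div_self hpos.ne', hzs, hKv]
    linear_combination hAδ
  · intro h0
    rw [hder] at h0
    exact absurd h0 hpos.ne'

/-- unsaturated decreasing branch -/
lemma aux_dec (hK : 0 < K) (hγ : 0 < γ) (hA : γ < A)
    (hδpos : 0 < δ) (hAδ : 4 * A * δ = γ)
    (v : ℝ → ℝ)
    (hv1 : ∀ u : ℝ, δ ≤ u → v u = (1/K) * max (-(A-γ)) (min (A-γ) (A * zigzag (u - δ))))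
    (s : ℝ) (n : ℤ) (hs : δ < s)
    (h1 : 1/4 + δ < s - δ - n) (h2 : s - δ - n < 3/4 - δ) :
    (deriv v s ≠ 0 → A * zigzag s = K * v s + γ * (deriv v s / |deriv v s|)) ∧
    (deriv v s = 0 → A * zigzag s - K * v s ∈ Set.Icc (-γ) γ) := by
  have hA0 : 0 < A := hγ.trans hA
  have hδ4 : δ < 1/4 := by nlinarith
  have hsab : s ∈ Set.Ioo (max δ ((n : ℝ) + 1/4 + 2*δ)) ((n : ℝ) + 3/4) :=
    ⟨max_lt hs (by linarith), by linarith⟩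
  set a := max δ ((n : ℝ) + 1/4 + 2*δ) with ha
  set b := (n : ℝ) + 3/4 with hb
  have hval : ∀ u ∈ Set.Ioo a b, v u = (-((4*A)/K)) * u + ((A/K) * (2 + 4*(δ + n))) := by
    intro u hu
    have hu1 : δ < u := (le_max_left _ _).trans_lt hu.1
    have hu2 : (n : ℝ) + 1/4 + 2*δ < u := (le_max_right _ _).trans_lt hu.1
    have hu3 : u < (n : ℝ) + 3/4 := hu.2
    have hz : zigzag (u - δ) = 2 - 4 * ((u - δ) - n) :=
      zig_dec n (u - δ) (by linarith) (by linarith)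
    have hb1 : A * (2 - 4 * ((u - δ) - n)) ≤ A - γ := by nlinarith
    have hb2 : -(A - γ) ≤ A * (2 - 4 * ((u - δ) - n)) := by nlinarith
    rw [hv1 u hu1.le, hz, min_eq_right hb1, max_eq_right hb2]
    field_simp; ring
  have hder : deriv v s = -((4*A)/K) := deriv_affine_local v s a b _ _ hsab hval
  have hvs := hval s hsab
  have hKv : K * v s = A * (2 - 4*(s - δ - n)) := by rw [hvs]; field_simp; ring
  have hzs : zigzag s = 2 - 4 * (s - n) := zig_dec n s (by linarith) (by linarith)
  have hpos : (0:ℝ) < 4*A/K := by positivity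
  constructor
  · intro _
    rw [hder, abs_of_neg (by linarith), hzs, hKv, neg_neg, neg_div, div_self hpos.ne']
    linear_combination -hAδ
  · intro h0
    rw [hder, neg_eq_zero] at h0
    exact absurd h0 hpos.ne'

/-- saturated high branch -/
lemma aux_sat_hi (hK : 0 < K) (hγ : 0 < γ) (hA : γ < A)
    (hδpos : 0 < δ) (hAδ : 4 * A * δ = γ)
    (v : ℝ → ℝ)
    (hv1 : ∀ u : ℝ, δ ≤ u → v u = (1/K) * max (-(A-γ)) (min (A-γ) (A * zigzag (u - δ))))
    (s : ℝ) (hs : δ < s) (hgt : A - γ < A * zigzag (s - δ)) :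
    (deriv v s ≠ 0 → A * zigzag s = K * v s + γ * (deriv v s / |deriv v s|)) ∧
    (deriv v s = 0 → A * zigzag s - K * v s ∈ Set.Icc (-γ) γ) := by
  have hA0 : 0 < A := hγ.trans hA
  have hU : IsOpen {u : ℝ | δ < u ∧ A - γ < A * zigzag (u - δ)} := by
    apply IsOpen.inter
    · exact isOpen_lt continuous_const continuous_id
    · exact isOpen_lt continuous_const
        (continuous_const.mul (zigzag_continuous.comp (continuous_id.sub continuous_const)))
  have hsU : s ∈ {u : ℝ | δ < u ∧ A - γ < A * zigzag (u - δ)} := ⟨hs, hgt⟩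
  have hev : v =ᶠ[nhds s] fun _ => (1/K) * (A - γ) := by
    refine Filter.eventuallyEq_of_mem (hU.mem_nhds hsU) ?_
    intro u hu
    rw [hv1 u hu.1.le, min_eq_left hu.2.le, max_eq_right (by linarith)]
  have hder : deriv v s = 0 := by rw [hev.deriv_eq]; exact deriv_const _ _
  have hvs : v s = (1/K) * (A - γ) := hev.eq_of_nhds
  have hKv : K * v s = A - γ := by rw [hvs]; field_simp
  refine ⟨fun hne => absurd hder hne, fun _ => ?_⟩
  rw [hKv]
  have hzb := zigzag_abs_le s
  rw [abs_le] at hzb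
  have hlip := zigzag_lip (s - δ) s
  rw [show s - δ - s = -δ by ring, abs_neg, abs_of_pos hδpos] at hlip
  have hlip' : zigzag (s - δ) - zigzag s ≤ 4 * δ := (le_abs_self _).trans hlip
  have hprod : A * (zigzag (s - δ) - zigzag s) ≤ A * (4 * δ) :=
    mul_le_mul_of_nonneg_left hlip' hA0.le
  constructor
  · nlinarith
  · nlinarith

/-- saturated low branch -/
lemma aux_sat_lo (hK : 0 < K) (hγ : 0 < γ) (hA : γ < A)
    (hδpos : 0 < δ) (hAδ : 4 * A * δ = γ)
    (v : ℝ → ℝ)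
    (hv1 : ∀ u : ℝ, δ ≤ u → v u = (1/K) * max (-(A-γ)) (min (A-γ) (A * zigzag (u - δ))))
    (s : ℝ) (hs : δ < s) (hlt : A * zigzag (s - δ) < -(A - γ)) :
    (deriv v s ≠ 0 → A * zigzag s = K * v s + γ * (deriv v s / |deriv v s|)) ∧
    (deriv v s = 0 → A * zigzag s - K * v s ∈ Set.Icc (-γ) γ) := by
  have hA0 : 0 < A := hγ.trans hA
  have hU : IsOpen {u : ℝ | δ < u ∧ A * zigzag (u - δ) < -(A - γ)} := by
    apply IsOpen.inter
    · exact isOpen_lt continuous_const continuous_id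
    · exact isOpen_lt
        (continuous_const.mul (zigzag_continuous.comp (continuous_id.sub continuous_const)))
        continuous_const
  have hsU : s ∈ {u : ℝ | δ < u ∧ A * zigzag (u - δ) < -(A - γ)} := ⟨hs, hlt⟩
  have hev : v =ᶠ[nhds s] fun _ => (1/K) * (-(A - γ)) := by
    refine Filter.eventuallyEq_of_mem (hU.mem_nhds hsU) ?_
    intro u hu
    rw [hv1 u hu.1.le, min_eq_right (by linarith [hu.2]), max_eq_left (by linarith [hu.2])]
  have hder : deriv v s = 0 := by rw [hev.deriv_eq]; exact deriv_const _ _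
  have hvs : v s = (1/K) * (-(A - γ)) := hev.eq_of_nhds
  have hKv : K * v s = -(A - γ) := by rw [hvs]; field_simp
  refine ⟨fun hne => absurd hder hne, fun _ => ?_⟩
  rw [hKv]
  have hzb := zigzag_abs_le s
  rw [abs_le] at hzb
  have hlip := zigzag_lip s (s - δ)
  rw [show s - (s - δ) = δ by ring, abs_of_pos hδpos] at hlip
  have hlip' : zigzag s - zigzag (s - δ) ≤ 4 * δ := (le_abs_self _).trans hlip
  have hprod : A * (zigzag s - zigzag (s - δ)) ≤ A * (4 * δ) :=
    mul_le_mul_of_nonneg_left hlip' hA0.le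
  constructor
  · nlinarith
  · nlinarith

end Aux

/-- For `A > γ`, the delayed and truncated (play-operator) response
`v(s) = (1/K) P(A z(s - γ/(4A)))` solves the rate-independent system driven by the
zigzag boundary datum, exhibiting hysteresis. -/
theorem play_operator_solves_rate_independent_system
    (K γ A : ℝ) (hK : 0 < K) (hγ : 0 < γ) (hA : γ < A)
    (P : ℝ → ℝ) (hP : ∀ x : ℝ, P x = max (-(A - γ)) (min (A - γ) x))
    (v : ℝ → ℝ)
    (hv0 : ∀ s : ℝ, 0 ≤ s → s ≤ γ / (4 * A) → v s = 0)
    (hv1 : ∀ s : ℝ, γ / (4 * A) ≤ s → v s = (1 / K) * P (A * zigzag (s - γ / (4 * A)))) :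
    LocallyLipschitzOn (Set.Ici 0) v ∧ v 0 = 0 ∧
    ∀ᵐ s ∂(volume.restrict (Set.Ici (0 : ℝ))), DifferentiableAt ℝ v s →
      (deriv v s ≠ 0 → A * zigzag s = K * v s + γ * (deriv v s / |deriv v s|)) ∧
      (deriv v s = 0 → A * zigzag s - K * v s ∈ Set.Icc (-γ) γ) := by
  have hA0 : 0 < A := hγ.trans hA
  set δ := γ / (4 * A) with hδdef
  have hδpos : 0 < δ := by rw [hδdef]; positivity
  have hAδ : 4 * A * δ = γ := by rw [hδdef]; field_simp [hA0.ne']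
  have hδ4 : δ < 1/4 := by nlinarith
  have hzz : zigzag 0 = 0 := by
    unfold zigzag
    rw [Int.fract_zero, if_pos (by norm_num)]
    ring
  have hv1' : ∀ u : ℝ, δ ≤ u →
      v u = (1/K) * max (-(A-γ)) (min (A-γ) (A * zigzag (u - δ))) := by
    intro u hu; rw [hv1 u hu, hP]
  -- the combined formula on Ici 0
  have hvW : ∀ x ∈ Set.Ici (0:ℝ),
      v x = (1/K) * max (-(A-γ)) (min (A-γ) (A * zigzag (max (x - δ) 0))) := by
    intro x hx
    rcases le_total x δ with hx1 | hx1
    · rw [max_eq_right (by linarith : x - δ ≤ 0), hzz, mul_zero,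
        min_eq_right (by linarith), max_eq_right (by linarith), mul_zero]
      exact hv0 x hx hx1
    · rw [max_eq_left (by linarith : 0 ≤ x - δ)]
      exact hv1' x hx1
  refine ⟨?_, hv0 0 le_rfl hδpos.le, ?_⟩
  · -- locally Lipschitz
    have hlip : LipschitzOnWith (4 * A / K).toNNReal v (Set.Ici 0) := by
      rw [lipschitzOnWith_iff_dist_le_mul]
      intro a ha b hb
      rw [Real.coe_toNNReal _ (by positivity), Real.dist_eq, Real.dist_eq,
        hvW a ha, hvW b hb]
      set X1 := A * zigzag (max (a - δ) 0)
      set X2 := A * zigzag (max (b - δ) 0)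
      have h1 := clamp_lip (A - γ) X1 X2
      have h2 : |X1 - X2| ≤ A * (4 * |max (a - δ) 0 - max (b - δ) 0|) := by
        rw [show X1 - X2 = A * (zigzag (max (a - δ) 0) - zigzag (max (b - δ) 0)) by
          simp only [X1, X2]; ring, abs_mul, abs_of_nonneg hA0.le]
        exact mul_le_mul_of_nonneg_left (zigzag_lip _ _) hA0.le
      have h3 : |max (a - δ) 0 - max (b - δ) 0| ≤ |a - b| := by
        have := abs_max_sub_max_le_abs (a - δ) (b - δ) 0
        simpa using this
      have h4 : |max (-(A-γ)) (min (A-γ) X1) - max (-(A-γ)) (min (A-γ) X2)|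
          ≤ 4 * A * |a - b| := by nlinarith [abs_nonneg (a - b)]
      rw [show (1/K) * max (-(A-γ)) (min (A-γ) X1) - (1/K) * max (-(A-γ)) (min (A-γ) X2)
        = (1/K) * (max (-(A-γ)) (min (A-γ) X1) - max (-(A-γ)) (min (A-γ) X2)) by ring,
        abs_mul, abs_of_nonneg (by positivity : (0:ℝ) ≤ 1/K)]
      calc (1/K) * |max (-(A-γ)) (min (A-γ) X1) - max (-(A-γ)) (min (A-γ) X2)|
          ≤ (1/K) * (4 * A * |a - b|) :=
            mul_le_mul_of_nonneg_left h4 (by positivity)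
        _ = 4 * A / K * |a - b| := by ring
    intro x hx
    exact ⟨_, Set.Ici 0, self_mem_nhdsWithin, hlip⟩
  · -- a.e. statement
    set c := (A - γ) / A with hcdef
    have hc0 : 0 < c := div_pos (by linarith) hA0
    have hc1 : c < 1 := (div_lt_one hA0).2 (by linarith)
    have hcA : A * c = A - γ := by rw [hcdef]; field_simp
    set X := {t : ℝ | A * zigzag (t - δ) = A - γ ∨ A * zigzag (t - δ) = -(A - γ)} with hX
    set B := ({0, δ} : Set ℝ) ∪ X with hB
    have hXsub : X ⊆ ⋃ (n : ℤ), ({(n:ℝ) + c/4 + δ, (n:ℝ) + (2-c)/4 + δ,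
        (n:ℝ) + (2+c)/4 + δ, (n:ℝ) + (4-c)/4 + δ} : Set ℝ) := by
      intro t ht
      set u := t - δ with hu
      have hf0 := Int.fract_nonneg u
      have hf1 := Int.fract_lt_one u
      have hfl : (⌊u⌋ : ℝ) + Int.fract u = u := Int.floor_add_fract u
      rw [Set.mem_iUnion]
      refine ⟨⌊u⌋, ?_⟩
      simp only [Set.mem_insert_iff, Set.mem_singleton_iff]
      rcases ht with h | h
      · have hzc : A * zigzag u = A * c := by rw [hcA]; exact h
        have hzc' : zigzag u = c := by
          have := mul_left_cancel₀ hA0.ne' hzc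
          exact this
        unfold zigzag at hzc'
        split_ifs at hzc' with hb1 hb2
        · left; linarith
        · right; left; linarith
        · exfalso; linarith
      · have hzc : A * zigzag u = A * (-c) := by rw [mul_neg, hcA]; exact h
        have hzc' : zigzag u = -c := mul_left_cancel₀ hA0.ne' hzc
        unfold zigzag at hzc'
        split_ifs at hzc' with hb1 hb2
        · exfalso; linarith
        · right; right; left; linarith
        · right; right; right; linarith
    have hBc : B.Countable := by
      apply Set.Countable.union
      · exact (Set.countable_singleton δ).insert 0
      · refine Set.Countable.mono hXsub ?_
        exact Set.countable_iUnion fun n =>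
          (((Set.countable_singleton _).insert _).insert _).insert _
    have hB0 : volume B = 0 := hBc.measure_zero _
    have hae1 : ∀ᵐ s ∂(volume.restrict (Set.Ici (0:ℝ))), s ∉ B :=
      ae_restrict_of_ae (measure_eq_zero_iff_ae_notMem.1 hB0)
    filter_upwards [hae1, ae_restrict_mem measurableSet_Ici] with s hsB hs0
    intro _hdiff
    simp only [hB, hX, Set.mem_union, Set.mem_insert_iff, Set.mem_singleton_iff,
      Set.mem_setOf_eq, not_or] at hsB
    obtain ⟨⟨hne0, hneδ⟩, hne1, hne2⟩ := hsB
    have hspos : 0 < s := lt_of_le_of_ne hs0 (Ne.symm hne0)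
    rcases lt_or_gt_of_ne hneδ with hlt | hgt
    · -- 0 < s < δ : v locally zero
      have hval : ∀ u ∈ Set.Ioo (0:ℝ) δ, v u = 0 * u + 0 := by
        intro u hu
        rw [hv0 u hu.1.le hu.2.le]; ring
      have hder : deriv v s = 0 := deriv_affine_local v s 0 δ 0 0 ⟨hspos, hlt⟩ hval
      have hvs : v s = 0 := hv0 s hs0 hlt.le
      refine ⟨fun hne => absurd hder hne, fun _ => ?_⟩
      have hzs : zigzag s = 4 * (s - (0:ℤ)) :=
        zig_inc 0 s (by push_cast; linarith) (by push_cast; linarith)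
      rw [hzs, hvs]
      push_cast
      constructor
      · nlinarith
      · nlinarith
    · -- δ < s
      rcases lt_trichotomy (A * zigzag (s - δ)) (A - γ) with hlt1 | heq | hgt1
      · rcases lt_trichotomy (A * zigzag (s - δ)) (-(A - γ)) with hlt2 | heq2 | hgt2
        · exact aux_sat_lo hK hγ hA hδpos hAδ v hv1' s hgt hlt2
        · exact absurd heq2 hne2
        · -- unsaturated
          set t := s - δ with ht
          have hf0 := Int.fract_nonneg t
          have hf1 := Int.fract_lt_one t
          have hfl : (⌊t⌋ : ℝ) + Int.fract t = t := Int.floor_add_fract t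
          have hAeq1 : A - γ = A * (1 - 4*δ) := by linear_combination hAδ
          have hAeq2 : -(A - γ) = A * (-(1 - 4*δ)) := by linear_combination -hAδ
          by_cases hb1 : Int.fract t < 1/4
          · have hzt : zigzag t = 4 * Int.fract t := by unfold zigzag; rw [if_pos hb1]
            rw [hzt] at hlt1
            have hub : 4 * Int.fract t < 1 - 4*δ :=
              (mul_lt_mul_iff_right₀ hA0).1 (hAeq1 ▸ hlt1)
            exact aux_inc hK hγ hA hδpos hAδ v hv1' s ⌊t⌋ hgt
              (by linarith) (by linarith)
          · by_cases hb2 : Int.fract t < 3/4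
            · have hzt : zigzag t = 2 - 4 * Int.fract t := by
                unfold zigzag; rw [if_neg hb1, if_pos hb2]
              rw [hzt] at hlt1 hgt2
              have hub : 2 - 4 * Int.fract t < 1 - 4*δ :=
                (mul_lt_mul_iff_right₀ hA0).1 (hAeq1 ▸ hlt1)
              have hlb : -(1 - 4*δ) < 2 - 4 * Int.fract t :=
                (mul_lt_mul_iff_right₀ hA0).1 (hAeq2 ▸ hgt2)
              exact aux_dec hK hγ hA hδpos hAδ v hv1' s ⌊t⌋ hgt
                (by linarith) (by linarith)
            · have hzt : zigzag t = -4 + 4 * Int.fract t := by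
                unfold zigzag; rw [if_neg hb1, if_neg hb2]
              rw [hzt] at hgt2
              have hlb : -(1 - 4*δ) < -4 + 4 * Int.fract t :=
                (mul_lt_mul_iff_right₀ hA0).1 (hAeq2 ▸ hgt2)
              exact aux_inc hK hγ hA hδpos hAδ v hv1' s (⌊t⌋ + 1) hgt
                (by push_cast; linarith) (by push_cast; linarith)
      · exact absurd heq hne1
      · exact aux_sat_hi hK hγ hA hδpos hAδ v hv1' s hgt hgt1
end
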